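/- Suppose f is continuous on [a,b], piecewise strictly monotone with strict monotonicity on each of finitely many subintervals [x_i, x_{i+1}] (a = x_0 < x_1 < ... < x_{n+1} = b, each x_i for 1 ≤ i ≤ n a local extremum), f(a) ≠ f(b), and min(f(a),f(b)) < f(x) < max(f(a),f(b)) for all x ∈ (a,b). Then the number n of interior local extreme value points is even. -/

import Mathlib

open Real Set

theorem stmt_4 (a b : ℝ) (f : ℝ → ℝ) (n : ℕ) (x : ℕ → ℝ) (dir : ℕ → Bool)
    (hx0 : x 0 = a) (hxn : x (n + 1) = b)
    (hxlt : ∀ i ≤ n, x i < x (i + 1))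
    (hcont : ContinuousOn f (Set.Icc a b))
    (hmono : ∀ i ≤ n, (dir i = true → StrictMonoOn f (Set.Icc (x i) (x (i + 1)))) ∧
      (dir i = false → StrictAntiOn f (Set.Icc (x i) (x (i + 1)))))
    (halt : ∀ i < n, dir (i + 1) = !dir i)
    (hne : f a ≠ f b)
    (hbet : ∀ t ∈ Set.Ioo a b, min (f a) (f b) < f t ∧ f t < max (f a) (f b)) :
    Even n := by
  -- monotonicity of the partition points
  have hchain : ∀ j, j ≤ n + 1 → ∀ i, i ≤ j → x i ≤ x j := by
    intro j
    induction j with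
    | zero => intro _ i hi; rw [Nat.le_zero.mp hi]
    | succ k ih =>
      intro hk i hi
      rcases Nat.eq_or_lt_of_le hi with h | h
      · rw [h]
      · exact le_trans (ih (le_trans (Nat.le_succ k) hk) i (Nat.lt_succ_iff.mp h))
          (le_of_lt (hxlt k (Nat.succ_le_succ_iff.mp hk)))
  have hx1b : x 1 ≤ b := by
    rw [← hxn]; exact hchain (n + 1) le_rfl 1 (by omega)
  have hax1 : a < x 1 := by rw [← hx0]; exact hxlt 0 (Nat.zero_le n)
  have haxn : a ≤ x n := by
    rw [← hx0]; exact hchain n (by omega) 0 (Nat.zero_le n)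
  have hxnb : x n < b := by rw [← hxn]; exact hxlt n le_rfl
  -- first direction
  have hd0 : dir 0 = decide (f a < f b) := by
    rcases lt_or_gt_of_ne hne with hab | hab
    · simp only [hab, decide_true]
      by_contra h
      have h0 : dir 0 = false := by simpa using h
      have anti := (hmono 0 (Nat.zero_le n)).2 h0
      set t := (a + x 1) / 2 with ht
      have h1 : a < t := by simp [ht]; linarith
      have h2 : t < x 1 := by simp [ht]; linarith
      have hft : f t < f a := by
        have := anti (by rw [hx0]; exact ⟨le_rfl, le_of_lt hax1⟩)
          (by rw [hx0]; exact ⟨le_of_lt h1, le_of_lt h2⟩) h1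
        simpa using this
      have := (hbet t ⟨h1, lt_of_lt_of_le h2 hx1b⟩).1
      rw [min_eq_left (le_of_lt hab)] at this
      linarith
    · simp only [not_lt_of_gt hab, decide_false]
      by_contra h
      have h0 : dir 0 = true := by simpa using h
      have mono := (hmono 0 (Nat.zero_le n)).1 h0
      set t := (a + x 1) / 2 with ht
      have h1 : a < t := by simp [ht]; linarith
      have h2 : t < x 1 := by simp [ht]; linarith
      have hft : f a < f t := by
        have := mono (by rw [hx0]; exact ⟨le_rfl, le_of_lt hax1⟩)
          (by rw [hx0]; exact ⟨le_of_lt h1, le_of_lt h2⟩) h1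
        simpa using this
      have := (hbet t ⟨h1, lt_of_lt_of_le h2 hx1b⟩).2
      rw [max_eq_left (le_of_lt hab)] at this
      linarith
  -- last direction
  have hdn : dir n = decide (f a < f b) := by
    rcases lt_or_gt_of_ne hne with hab | hab
    · simp only [hab, decide_true]
      by_contra h
      have h0 : dir n = false := by simpa using h
      have anti := (hmono n le_rfl).2 h0
      set t := (x n + b) / 2 with ht
      have h1 : x n < t := by simp [ht]; linarith
      have h2 : t < b := by simp [ht]; linarith
      have hft : f b < f t := by
        have := anti (by rw [hxn]; exact ⟨le_of_lt h1, le_of_lt h2⟩)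
          (by rw [hxn]; exact ⟨le_of_lt hxnb, le_rfl⟩) h2
        simpa using this
      have := (hbet t ⟨lt_of_le_of_lt haxn h1, h2⟩).2
      rw [max_eq_right (le_of_lt hab)] at this
      linarith
    · simp only [not_lt_of_gt hab, decide_false]
      by_contra h
      have h0 : dir n = true := by simpa using h
      have mono := (hmono n le_rfl).1 h0
      set t := (x n + b) / 2 with ht
      have h1 : x n < t := by simp [ht]; linarith
      have h2 : t < b := by simp [ht]; linarith
      have hft : f t < f b := by
        have := mono (by rw [hxn]; exact ⟨le_of_lt h1, le_of_lt h2⟩)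
          (by rw [hxn]; exact ⟨le_of_lt hxnb, le_rfl⟩) h2
        simpa using this
      have := (hbet t ⟨lt_of_le_of_lt haxn h1, h2⟩).1
      rw [min_eq_right (le_of_lt hab)] at this
      linarith
  -- parity
  have hpar : ∀ i ≤ n, dir i = (if Even i then dir 0 else !dir 0) := by
    intro i
    induction i with
    | zero => intro _; simp
    | succ k ih =>
      intro hk
      rw [halt k (Nat.lt_of_succ_le hk), ih (le_of_lt (Nat.lt_of_succ_le hk))]
      rcases Nat.even_or_odd k with he | ho
      · simp [he, Nat.even_add_one, he]
      · simp [Nat.not_even_iff_odd.mpr ho, Nat.even_add_one, Nat.not_even_iff_odd.mpr ho]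
  have := hpar n le_rfl
  rw [hdn, ← hd0] at this
  by_contra hodd
  rw [if_neg hodd] at this
  simp at this
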